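/- Let n ≥ 2 and let v_1 < v_2 < ⋯ < v_n be real numbers, and let ε_1, …, ε_n ∈ (0, 1/1000]. Define the planar point set P = { (−ε_i, v_i), (ε_i, v_i) : 1 ≤ i ≤ n }, let g = max_{1 ≤ i ≤ n−1} (v_{i+1} − v_i) be the largest gap, and let r = sup_{c ∈ convexHull(P)} ( min_{p ∈ P} ‖c − p‖ ) be the radius of the maximum empty circle of P with centre in the convex hull of P. Then g/2 ≤ r ≤ √( (g/2)² + (1/500)² ). -/

import Mathlib

noncomputable section

private lemma espd (x y : EuclideanSpace ℝ (Fin 2)) :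
    dist x y = Real.sqrt ((x 0 - y 0) ^ 2 + (x 1 - y 1) ^ 2) := by
  rw [EuclideanSpace.dist_eq, Fin.sum_univ_two, Real.dist_eq, Real.dist_eq, sq_abs, sq_abs]

private lemma esp0 (a b : ℝ) : (WithLp.toLp 2 ![a, b] : EuclideanSpace ℝ (Fin 2)) 0 = a := rfl
private lemma esp1 (a b : ℝ) : (WithLp.toLp 2 ![a, b] : EuclideanSpace ℝ (Fin 2)) 1 = b := rfl

private lemma mid2 (a b c d : ℝ) :
    midpoint ℝ (WithLp.toLp 2 ![a, b] : EuclideanSpace ℝ (Fin 2)) (WithLp.toLp 2 ![c, d] : EuclideanSpace ℝ (Fin 2))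
      = (WithLp.toLp 2 ![(a + c) / 2, (b + d) / 2] : EuclideanSpace ℝ (Fin 2)) := by
  ext k
  have h : midpoint ℝ (WithLp.toLp 2 ![a, b] : EuclideanSpace ℝ (Fin 2)) (WithLp.toLp 2 ![c, d])
      = (2⁻¹ : ℝ) • ((WithLp.toLp 2 ![a, b] : EuclideanSpace ℝ (Fin 2)) + (WithLp.toLp 2 ![c, d])) := midpoint_eq_smul_add _ _ _
  rw [h]
  fin_cases k <;>
    simp [PiLp.smul_apply, PiLp.add_apply, esp0, esp1] <;> ring


/-- Maximum empty circle of the gap construction: for the point set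
`P = {(-ε_i, v_i), (ε_i, v_i)}` with `v` strictly increasing and `ε_i ∈ (0, 1/1000]`,
the maximum empty circle radius `r` (over centres in the convex hull of `P`) satisfies
`g/2 ≤ r ≤ √((g/2)² + (1/500)²)`, where `g` is the largest gap of `v`. -/
theorem maximum_empty_circle_gap
    (n : ℕ) (hn : 2 ≤ n) (v : Fin n → ℝ) (hv : StrictMono v)
    (ε : Fin n → ℝ) (hε : ∀ i, ε i ∈ Set.Ioc (0 : ℝ) (1 / 1000))
    (P : Set (EuclideanSpace ℝ (Fin 2)))
    (hP : P = {z | ∃ i : Fin n,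
      z = (WithLp.toLp 2 ![-(ε i), v i] : EuclideanSpace ℝ (Fin 2)) ∨
      z = (WithLp.toLp 2 ![ε i, v i] : EuclideanSpace ℝ (Fin 2))})
    (g : ℝ)
    (hg : IsGreatest {d : ℝ | ∃ i j : Fin n, (j : ℕ) = (i : ℕ) + 1 ∧ d = v j - v i} g)
    (r : ℝ)
    (hr : r = sSup {ρ : ℝ | ∃ c ∈ convexHull ℝ P, ρ = Metric.infDist c P}) :
    g / 2 ≤ r ∧ r ≤ Real.sqrt ((g / 2) ^ 2 + (1 / 500) ^ 2) := by
  classical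
  obtain ⟨⟨i, j, hij, hgv⟩, hub⟩ := hg
  have hmemL : ∀ k : Fin n, (WithLp.toLp 2 ![-(ε k), v k] : EuclideanSpace ℝ (Fin 2)) ∈ P := fun k => by
    rw [hP]; exact ⟨k, Or.inl rfl⟩
  have hmemR : ∀ k : Fin n, (WithLp.toLp 2 ![ε k, v k] : EuclideanSpace ℝ (Fin 2)) ∈ P := fun k => by
    rw [hP]; exact ⟨k, Or.inr rfl⟩
  have hPne : P.Nonempty := ⟨_, hmemL ⟨0, by omega⟩⟩
  have hg0 : 0 < g := by
    have : v i < v j := hv (Fin.lt_def.mpr (by omega))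
    linarith [hgv]
  set B := Real.sqrt ((g / 2) ^ 2 + (1 / 500) ^ 2) with hB
  set m := (v i + v j) / 2 with hm
  set c₀ : EuclideanSpace ℝ (Fin 2) := (WithLp.toLp 2 ![0, m]) with hc₀
  -- c₀ is in the convex hull
  have hc₀mem : c₀ ∈ convexHull ℝ P := by
    have h1 : midpoint ℝ (WithLp.toLp 2 ![-(ε i), v i] : EuclideanSpace ℝ (Fin 2)) (WithLp.toLp 2 ![ε i, v i])
        = (WithLp.toLp 2 ![0, v i] : EuclideanSpace ℝ (Fin 2)) := by
      rw [mid2]; norm_num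
    have h2 : midpoint ℝ (WithLp.toLp 2 ![-(ε j), v j] : EuclideanSpace ℝ (Fin 2)) (WithLp.toLp 2 ![ε j, v j])
        = (WithLp.toLp 2 ![0, v j] : EuclideanSpace ℝ (Fin 2)) := by
      rw [mid2]; norm_num
    have h3 : midpoint ℝ (WithLp.toLp 2 ![0, v i] : EuclideanSpace ℝ (Fin 2)) (WithLp.toLp 2 ![0, v j]) = c₀ := by
      rw [mid2]; norm_num [hc₀, hm]
    have hcv : Convex ℝ (convexHull ℝ P) := convex_convexHull ℝ P
    have ha : (WithLp.toLp 2 ![0, v i] : EuclideanSpace ℝ (Fin 2)) ∈ convexHull ℝ P := by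
      rw [← h1]
      exact hcv.segment_subset (subset_convexHull ℝ P (hmemL i))
        (subset_convexHull ℝ P (hmemR i)) (midpoint_mem_segment _ _)
    have hb : (WithLp.toLp 2 ![0, v j] : EuclideanSpace ℝ (Fin 2)) ∈ convexHull ℝ P := by
      rw [← h2]
      exact hcv.segment_subset (subset_convexHull ℝ P (hmemL j))
        (subset_convexHull ℝ P (hmemR j)) (midpoint_mem_segment _ _)
    rw [← h3]
    exact hcv.segment_subset ha hb (midpoint_mem_segment _ _)
  -- lower bound on infDist at c₀
  have hlow : g / 2 ≤ Metric.infDist c₀ P := by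
    rw [Metric.infDist_eq_iInf]
    have : Nonempty P := hPne.to_subtype
    refine le_ciInf fun ⟨z, hz⟩ => ?_
    rw [hP] at hz
    have key : ∀ k : Fin n, ∀ e : ℝ, g / 2 ≤ dist c₀ (WithLp.toLp 2 ![e, v k] : EuclideanSpace ℝ (Fin 2)) := by
      intro k e
      rw [espd]
      have h0 : c₀ 0 = 0 := rfl
      have h1 : c₀ 1 = m := rfl
      rw [h0, h1, esp0, esp1]
      have habs : g / 2 ≤ |m - v k| := by
        rcases le_or_gt (k : ℕ) (i : ℕ) with hk | hk
        · have : v k ≤ v i := hv.monotone (Fin.le_def.mpr (by omega))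
          refine le_abs.2 (Or.inl ?_)
          rw [hgv] at *; simp only [hm]; linarith
        · have : v j ≤ v k := hv.monotone (Fin.le_def.mpr (by omega))
          refine le_abs.2 (Or.inr ?_)
          rw [hgv] at *; simp only [hm]; linarith
      calc g / 2 ≤ |m - v k| := habs
        _ = Real.sqrt ((m - v k) ^ 2) := (Real.sqrt_sq_eq_abs _).symm
        _ ≤ Real.sqrt ((0 - e) ^ 2 + (m - v k) ^ 2) :=
            Real.sqrt_le_sqrt (le_add_of_nonneg_left (sq_nonneg _))
    show g / 2 ≤ dist c₀ z
    obtain ⟨k, hk | hk⟩ := hz <;> subst hk <;> exact key k _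
  -- upper bound: every point of the hull is within B of P
  have hub' : ∀ c ∈ convexHull ℝ P, Metric.infDist c P ≤ B := by
    intro c hc
    have hlin0 : IsLinearMap ℝ (fun z : EuclideanSpace ℝ (Fin 2) => z 0) :=
      ⟨fun a b => rfl, fun t x => rfl⟩
    have hlin1 : IsLinearMap ℝ (fun z : EuclideanSpace ℝ (Fin 2) => z 1) :=
      ⟨fun a b => rfl, fun t x => rfl⟩
    set Q : Set (EuclideanSpace ℝ (Fin 2)) :=
      ({z | z 0 ≤ 1 / 1000} ∩ {z | -(1 / 1000) ≤ z 0}) ∩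
      ({z | v ⟨0, by omega⟩ ≤ z 1} ∩ {z | z 1 ≤ v ⟨n - 1, by omega⟩}) with hQ
    have hQconv : Convex ℝ Q :=
      ((convex_halfSpace_le hlin0 _).inter (convex_halfSpace_ge hlin0 _)).inter
        ((convex_halfSpace_ge hlin1 _).inter (convex_halfSpace_le hlin1 _))
    have hPQ : P ⊆ Q := by
      rw [hP]
      rintro z ⟨k, hk | hk⟩ <;> subst hk <;>
      · obtain ⟨hε1, hε2⟩ := hε k
        refine ⟨⟨?_, ?_⟩, ?_, ?_⟩ <;>
          simp only [esp0, esp1, Set.mem_setOf_eq]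
        · simp only [Matrix.cons_val_zero]; linarith
        · simp only [Matrix.cons_val_zero]; linarith
        · exact hv.monotone (Fin.le_def.mpr (by simp))
        · exact hv.monotone (by rw [Fin.le_def]; show (k : ℕ) ≤ n - 1; omega)
    have hcQ : c ∈ Q := convexHull_min hPQ hQconv hc
    obtain ⟨⟨hx1, hx2⟩, hy1, hy2⟩ := hcQ
    simp only [Set.mem_setOf_eq] at hx1 hx2 hy1 hy2
    -- bracket c 1 between a consecutive pair
    obtain ⟨a, b, hab, hva, hvb⟩ :
        ∃ a b : Fin n, (b : ℕ) = (a : ℕ) + 1 ∧ v a ≤ c 1 ∧ c 1 ≤ v b := by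
      set T : Finset (Fin n) := Finset.univ.filter (fun k => v k ≤ c 1) with hT
      have hTne : T.Nonempty := ⟨⟨0, by omega⟩, by simp [hT, hy1]⟩
      set a := T.max' hTne with haa
      have ha : v a ≤ c 1 := by
        have := T.max'_mem hTne
        simpa [hT] using this
      by_cases hcase : (a : ℕ) + 1 < n
      · refine ⟨a, ⟨(a : ℕ) + 1, hcase⟩, rfl, ha, ?_⟩
        by_contra h
        push_neg at h
        have hbT : (⟨(a : ℕ) + 1, hcase⟩ : Fin n) ∈ T := by
          simp [hT]; linarith
        have := T.le_max' _ hbT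
        rw [Fin.le_def] at this
        simp at this
        exact lt_irrefl _ this
      · have haval : (a : ℕ) = n - 1 := by have := a.isLt; omega
        have haeq : a = ⟨n - 1, by omega⟩ := Fin.ext (by show (a : ℕ) = n - 1; omega)
        refine ⟨⟨n - 2, by omega⟩, a, by show (a : ℕ) = n - 2 + 1; omega, ?_, ?_⟩
        · have : v (⟨n - 2, by omega⟩ : Fin n) ≤ v a :=
            hv.monotone (by rw [Fin.le_def]; show n - 2 ≤ (a : ℕ); omega)
          linarith
        · rw [haeq]; exact hy2
    have hgap : v b - v a ≤ g := hub ⟨a, b, hab, rfl⟩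
    -- pick the closer endpoint
    have main : ∀ t : Fin n, |c 1 - v t| ≤ g / 2 → Metric.infDist c P ≤ B := by
      intro t ht
      have h1 : (c 0 - ε t) ^ 2 ≤ (1 / 500) ^ 2 := by
        obtain ⟨hε1, hε2⟩ := hε t
        apply sq_le_sq' <;> linarith
      have h2 : (c 1 - v t) ^ 2 ≤ (g / 2) ^ 2 := by
        have := abs_le.1 ht
        apply sq_le_sq' <;> linarith [this.1, this.2]
      calc Metric.infDist c P ≤ dist c (WithLp.toLp 2 ![ε t, v t] : EuclideanSpace ℝ (Fin 2)) :=
            Metric.infDist_le_dist_of_mem (hmemR t)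
        _ = Real.sqrt ((c 0 - ε t) ^ 2 + (c 1 - v t) ^ 2) := by rw [espd, esp0, esp1]
        _ ≤ B := Real.sqrt_le_sqrt (by linarith)
    rcases le_or_gt (c 1 - v a) ((v b - v a) / 2) with hca | hca
    · exact main a (abs_le.2 ⟨by linarith, by linarith⟩)
    · exact main b (abs_le.2 ⟨by linarith, by linarith⟩)
  -- conclude
  subst hr
  set S := {ρ : ℝ | ∃ c ∈ convexHull ℝ P, ρ = Metric.infDist c P} with hS
  have hSne : S.Nonempty := ⟨_, c₀, hc₀mem, rfl⟩
  have hSbdd : BddAbove S := ⟨B, by rintro ρ ⟨c, hc, rfl⟩; exact hub' c hc⟩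
  constructor
  · exact le_trans hlow (le_csSup hSbdd ⟨c₀, hc₀mem, rfl⟩)
  · exact csSup_le hSne (by rintro ρ ⟨c, hc, rfl⟩; exact hub' c hc)
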